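/- For distinct complex numbers c_1, ..., c_k with c_k \u2260 c_j for all j < k, the coefficient at the identity element in \u2102[S_k] of the product (s_{k-1} + a_{k-1})(s_{k-2} + a_{k-2}) \u22ef (s_1 + a_1) s_1 s_2 \u22ef s_{k-1} is equal to 1, for any complex scalars a_1, ..., a_{k-1}. -/

import Mathlib

/-- The adjacent transposition `s_i = (i, i+1)` (1-based) in `S_k`. -/
def adjSwap (k i : ℕ) : Equiv.Perm (Fin k) :=
  if h : 0 < i ∧ i < k then Equiv.swap ⟨i - 1, by omega⟩ ⟨i, h.2⟩ else 1

/-- `(s_{k-1} + a_{k-1}) ⋯ (s_1 + a_1)` in the group algebra `ℂ[S_k]`. -/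
noncomputable def leftProd (k : ℕ) (a : ℕ → ℂ) : MonoidAlgebra ℂ (Equiv.Perm (Fin k)) :=
  (((List.range (k - 1)).map (fun m =>
      MonoidAlgebra.of ℂ (Equiv.Perm (Fin k)) (adjSwap k (m + 1)) +
        (a (m + 1)) • 1)).reverse).prod

/-- `s_1 s_2 ⋯ s_{k-1}` in the group algebra `ℂ[S_k]`. -/
noncomputable def rightProd (k : ℕ) : MonoidAlgebra ℂ (Equiv.Perm (Fin k)) :=
  ((List.range (k - 1)).map (fun m =>
      MonoidAlgebra.of ℂ (Equiv.Perm (Fin k)) (adjSwap k (m + 1)))).prod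

namespace CoeffAux

lemma adjSwap_inv (k i : ℕ) : (adjSwap k i)⁻¹ = adjSwap k i := by
  unfold adjSwap
  split_ifs with h
  · exact Equiv.swap_inv _ _
  · rfl

lemma adjSwap_fix {k i : ℕ} (x : Fin k) (h1 : x.val ≠ i - 1) (h2 : x.val ≠ i) :
    adjSwap k i x = x := by
  unfold adjSwap
  split_ifs with h
  · exact Equiv.swap_apply_of_ne_of_ne (fun he => h1 (congrArg Fin.val he))
      (fun he => h2 (congrArg Fin.val he))
  · rfl

/-- `w n = s_n ⋯ s_1`. -/
def wP (k n : ℕ) : Equiv.Perm (Fin k) :=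
  (((List.range n).map (fun m => adjSwap k (m + 1))).reverse).prod

lemma wP_succ (k n : ℕ) : wP k (n + 1) = adjSwap k (n + 1) * wP k n := by
  simp [wP, List.range_succ]

lemma wP_fix {k : ℕ} : ∀ (n : ℕ) (x : Fin k), n < x.val → wP k n x = x := by
  intro n
  induction n with
  | zero => intro x _; simp [wP]
  | succ n ih =>
    intro x hx
    rw [wP_succ]
    have h1 : wP k n x = x := ih x (by omega)
    simp only [Equiv.Perm.mul_apply, h1]
    exact adjSwap_fix x (by omega) (by omega)

lemma prod_inv_eq_wP (k : ℕ) : ∀ n,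
    (((List.range n).map (fun m => adjSwap k (m + 1))).prod)⁻¹ = wP k n := by
  intro n
  induction n with
  | zero => simp [wP]
  | succ n ih =>
    rw [List.range_succ, wP_succ]
    simp only [List.map_append, List.prod_append, List.map_cons, List.prod_cons,
      List.map_nil, List.prod_nil, mul_one, mul_inv_rev, ih, adjSwap_inv]

/-- partial left product -/
noncomputable def Lp (k : ℕ) (a : ℕ → ℂ) (n : ℕ) : MonoidAlgebra ℂ (Equiv.Perm (Fin k)) :=
  (((List.range n).map (fun m =>
      MonoidAlgebra.of ℂ (Equiv.Perm (Fin k)) (adjSwap k (m + 1)) +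
        (a (m + 1)) • 1)).reverse).prod

lemma Lp_succ (k : ℕ) (a : ℕ → ℂ) (n : ℕ) :
    Lp k a (n + 1) =
      (MonoidAlgebra.of ℂ (Equiv.Perm (Fin k)) (adjSwap k (n + 1)) + (a (n + 1)) • 1)
        * Lp k a n := by
  simp [Lp, List.range_succ]

lemma Lp_support {k : ℕ} (a : ℕ → ℂ) : ∀ n, ∀ g ∈ (Lp k a n).coeff.support,
    ∀ x : Fin k, n < x.val → g x = x := by
  intro n
  induction n with
  | zero =>
    intro g hg x _
    have : g = 1 := by
      have h1 : (Lp k a 0) = MonoidAlgebra.single 1 1 := by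
        simp [Lp]; rfl
      rw [h1, MonoidAlgebra.coeff_single] at hg
      have := Finsupp.support_single_subset hg
      simpa using this
    simp [this]
  | succ n ih =>
    intro g hg x hx
    rw [Lp_succ, add_mul, smul_mul_assoc, one_mul] at hg
    rcases Finset.mem_union.mp (Finsupp.support_add hg) with hg | hg
    · -- g in support of (of σ) * Lp n
      have hne : (MonoidAlgebra.of ℂ (Equiv.Perm (Fin k)) (adjSwap k (n + 1))
          * Lp k a n).coeff g ≠ 0 := Finsupp.mem_support_iff.mp hg
      rw [MonoidAlgebra.of_apply, MonoidAlgebra.coeff_single_mul_apply, one_mul] at hne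
      have hmem : (adjSwap k (n + 1))⁻¹ * g ∈ (Lp k a n).coeff.support :=
        Finsupp.mem_support_iff.mpr hne
      have h1 : ((adjSwap k (n + 1))⁻¹ * g) x = x := ih _ hmem x (by omega)
      have h2 : g x = adjSwap k (n + 1) (((adjSwap k (n + 1))⁻¹ * g) x) := by
        simp [Equiv.Perm.mul_apply]
      rw [h2, h1]
      exact adjSwap_fix x (by omega) (by omega)
    · have hmem : g ∈ (Lp k a n).coeff.support := by
        have := Finsupp.support_smul (b := a (n + 1)) (g := (Lp k a n).coeff)
        exact this hg
      exact ih g hmem x (by omega)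

lemma Lp_coeff {k : ℕ} (a : ℕ → ℂ) : ∀ n, n ≤ k - 1 → (Lp k a n).coeff (wP k n) = 1 := by
  intro n
  induction n with
  | zero =>
    intro _
    have h1 : (Lp k a 0) = MonoidAlgebra.single 1 1 := by simp [Lp]; rfl
    rw [h1]
    simp [wP]
  | succ n ih =>
    intro hn
    have hk : n + 1 < k := by omega
    rw [Lp_succ, add_mul, smul_mul_assoc, one_mul]
    rw [MonoidAlgebra.coeff_add, Finsupp.add_apply, MonoidAlgebra.coeff_smul, Finsupp.smul_apply, MonoidAlgebra.of_apply,
      MonoidAlgebra.coeff_single_mul_apply, one_mul]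
    have hσ : (adjSwap k (n + 1))⁻¹ * wP k (n + 1) = wP k n := by
      rw [wP_succ, ← mul_assoc, inv_mul_cancel, one_mul]
    rw [hσ, ih (by omega)]
    -- show Lp k a n (wP k (n+1)) = 0
    have hzero : (Lp k a n).coeff (wP k (n + 1)) = 0 := by
      by_contra h
      have hmem : wP k (n + 1) ∈ (Lp k a n).coeff.support := Finsupp.mem_support_iff.mpr h
      have hfix : wP k (n + 1) ⟨n + 1, hk⟩ = ⟨n + 1, hk⟩ :=
        Lp_support a n _ hmem ⟨n + 1, hk⟩ (by simp)
      have hmove : wP k (n + 1) ⟨n + 1, hk⟩ = ⟨n, by omega⟩ := by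
        rw [wP_succ]
        simp only [Equiv.Perm.mul_apply]
        rw [wP_fix n ⟨n + 1, hk⟩ (by simp)]
        unfold adjSwap
        rw [dif_pos ⟨Nat.succ_pos n, hk⟩]
        simp [Equiv.swap_apply_right]
      rw [hmove] at hfix
      have := congrArg Fin.val hfix
      simp at this
    rw [hzero]
    simp

end CoeffAux

/-- The coefficient at the identity of
`(s_{k-1} + a_{k-1}) ⋯ (s_1 + a_1) s_1 s_2 ⋯ s_{k-1}` is `1`. -/
theorem coeff_one_of_phi (k : ℕ) (c : ℕ → ℂ)
    (hc : ∀ j, 1 ≤ j → j < k → c k ≠ c j) (a : ℕ → ℂ) :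
    (leftProd k a * rightProd k).coeff (1 : Equiv.Perm (Fin k)) = 1 := by
  have hR : rightProd k = MonoidAlgebra.single
      (((List.range (k - 1)).map (fun m => adjSwap k (m + 1))).prod) 1 := by
    have hmaps : (List.range (k - 1)).map
        (fun m => MonoidAlgebra.of ℂ (Equiv.Perm (Fin k)) (adjSwap k (m + 1))) =
        ((List.range (k - 1)).map (fun m => adjSwap k (m + 1))).map
          (MonoidAlgebra.of ℂ (Equiv.Perm (Fin k))) := by
      simp [List.map_map]
    rw [rightProd, hmaps, ← map_list_prod (MonoidAlgebra.of ℂ (Equiv.Perm (Fin k)))]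
    rfl
  have hL : leftProd k a = CoeffAux.Lp k a (k - 1) := rfl
  rw [hR, hL, MonoidAlgebra.coeff_mul_single_apply, mul_one, one_mul,
    CoeffAux.prod_inv_eq_wP k (k - 1)]
  exact CoeffAux.Lp_coeff a (k - 1) le_rfl
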